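/- Let f(x) = x² - x - 3 and ρ(x) = x/(2x - 1). For every real x > -13/4, if y₁ and y₂ are the two real solutions of f(y) = x, then ρ(y₁)·y₁ + ρ(y₂)·y₂ = 1. -/

import Mathlib

/-- For `f y = y^2 - y - 3` and `ρ y = y / (2y - 1)`: if `x > -13/4` and
`y₁, y₂` are the two real solutions of `f y = x`, then `ρ y₁ * y₁ + ρ y₂ * y₂ = 1`. -/
theorem rho_id_sum_eq_one (x y₁ y₂ : ℝ)
    (hx : -13/4 < x)
    (h1 : y₁ ^ 2 - y₁ - 3 = x) (h2 : y₂ ^ 2 - y₂ - 3 = x) (hne : y₁ ≠ y₂) :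
    (y₁ / (2 * y₁ - 1)) * y₁ + (y₂ / (2 * y₂ - 1)) * y₂ = 1 := by
  have hsum : y₁ + y₂ = 1 := by
    have h : (y₁ - y₂) * (y₁ + y₂ - 1) = 0 := by nlinarith [h1, h2]
    rcases mul_eq_zero.mp h with h | h
    · exact absurd (by linarith) hne
    · linarith
  have h1ne : 2 * y₁ - 1 ≠ 0 := by
    intro h; apply hne; nlinarith
  have h2ne : 2 * y₂ - 1 ≠ 0 := by
    intro h; apply hne; nlinarith
  rw [div_mul_eq_mul_div, div_mul_eq_mul_div, div_add_div _ _ h1ne h2ne, div_eq_one_iff_eq (mul_ne_zero h1ne h2ne)]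
  linear_combination (2 * y₁ * y₂ - (y₁ + y₂) + 1) * hsum
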